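/- (Particular integrals of the central-force Hamiltonian in (r,φ,ρ) coordinates.) Let m > 0 and let V : (0,∞) → ℝ be differentiable. On the phase space with coordinates (r, φ, ρ, p_r, p_φ, p_ρ), restricted to r > 0 and ρ > 0, define K = (1/(2m))·(p_ρ² + p_r² + (2ρ/r)·p_ρ p_r + p_φ²/ρ²) + V(r). Then the canonical Poisson bracket in the pairs (r,p_r), (φ,p_φ), (ρ,p_ρ) satisfies: (i) {p_φ, K} = 0 identically, and (ii) {p_ρ, K} = −(p_r p_ρ)/(m r) + p_φ²/(m ρ³); in particular {p_ρ, K} = −(p_r/(m r))·p_ρ at every point with p_φ = 0. -/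

import Mathlib

open scoped BigOperators

/-- The `i`-th coordinate direction in the `q` (position) factor of phase space `ℝⁿ × ℝⁿ`. -/
noncomputable def eQ (n : ℕ) (i : Fin n) : (Fin n → ℝ) × (Fin n → ℝ) :=
  (Pi.single i 1, 0)

/-- The `i`-th coordinate direction in the `p` (momentum) factor of phase space `ℝⁿ × ℝⁿ`. -/
noncomputable def eP (n : ℕ) (i : Fin n) : (Fin n → ℝ) × (Fin n → ℝ) :=
  (0, Pi.single i 1)

/-- The canonical Poisson bracket `{f,g} = Σᵢ (∂f/∂qⁱ ∂g/∂pᵢ − ∂f/∂pᵢ ∂g/∂qⁱ)` on `ℝⁿ × ℝⁿ`. -/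
noncomputable def poissonBracket {n : ℕ} (f g : (Fin n → ℝ) × (Fin n → ℝ) → ℝ)
    (x : (Fin n → ℝ) × (Fin n → ℝ)) : ℝ :=
  ∑ i : Fin n, (fderiv ℝ f x (eQ n i) * fderiv ℝ g x (eP n i)
    - fderiv ℝ f x (eP n i) * fderiv ℝ g x (eQ n i))

/-- The Hamiltonian vector field `X_f = (∂f/∂p₁,…,∂f/∂pₙ, −∂f/∂q¹,…,−∂f/∂qⁿ)` on `ℝⁿ × ℝⁿ`. -/
noncomputable def hamVF {n : ℕ} (f : (Fin n → ℝ) × (Fin n → ℝ) → ℝ)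
    (x : (Fin n → ℝ) × (Fin n → ℝ)) : (Fin n → ℝ) × (Fin n → ℝ) :=
  (fun i => fderiv ℝ f x (eP n i), fun i => - fderiv ℝ f x (eQ n i))

/-- The central-force Hamiltonian in the non-orthogonal coordinates `(r, φ, ρ)`:
position coordinates `x.1 0 = r`, `x.1 1 = φ`, `x.1 2 = ρ` and conjugate momenta
`x.2 0 = p_r`, `x.2 1 = p_φ`, `x.2 2 = p_ρ`. -/
noncomputable def Kcf (m : ℝ) (V : ℝ → ℝ) (x : (Fin 3 → ℝ) × (Fin 3 → ℝ)) : ℝ :=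
  (1 / (2 * m)) * ((x.2 2) ^ 2 + (x.2 0) ^ 2
    + (2 * x.1 2 / x.1 0) * (x.2 2) * (x.2 0) + (x.2 1) ^ 2 / (x.1 2) ^ 2) + V (x.1 0)

abbrev E3 := (Fin 3 → ℝ) × (Fin 3 → ℝ)

noncomputable def Pc3 (i : Fin 3) : E3 →L[ℝ] ℝ :=
  (ContinuousLinearMap.proj i).comp (ContinuousLinearMap.snd ℝ (Fin 3 → ℝ) (Fin 3 → ℝ))

lemma diffKcf (m : ℝ) (hm : m ≠ 0) (V : ℝ → ℝ) (x : E3)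
    (hr : x.1 0 ≠ 0) (hρ : x.1 2 ≠ 0) (hVx : DifferentiableAt ℝ V (x.1 0)) :
    DifferentiableAt ℝ (Kcf m V) x := by
  have hq0 : DifferentiableAt ℝ (fun y : E3 => y.1 0) x :=
    ((ContinuousLinearMap.proj 0).comp
      (ContinuousLinearMap.fst ℝ (Fin 3 → ℝ) (Fin 3 → ℝ))).differentiableAt
  have hq2 : DifferentiableAt ℝ (fun y : E3 => y.1 2) x :=
    ((ContinuousLinearMap.proj 2).comp
      (ContinuousLinearMap.fst ℝ (Fin 3 → ℝ) (Fin 3 → ℝ))).differentiableAt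
  have hp0 : DifferentiableAt ℝ (fun y : E3 => y.2 0) x := (Pc3 0).differentiableAt
  have hp1 : DifferentiableAt ℝ (fun y : E3 => y.2 1) x := (Pc3 1).differentiableAt
  have hp2 : DifferentiableAt ℝ (fun y : E3 => y.2 2) x := (Pc3 2).differentiableAt
  show DifferentiableAt ℝ (fun y : E3 => (1 / (2 * m)) * ((y.2 2) ^ 2 + (y.2 0) ^ 2
    + (2 * y.1 2 / y.1 0) * (y.2 2) * (y.2 0) + (y.2 1) ^ 2 / (y.1 2) ^ 2) + V (y.1 0)) x
  have hmid : DifferentiableAt ℝ (fun y : E3 => (y.2 2) ^ 2 + (y.2 0) ^ 2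
      + (2 * y.1 2 / y.1 0) * (y.2 2) * (y.2 0) + (y.2 1) ^ 2 / (y.1 2) ^ 2) x :=
by
    have ha : DifferentiableAt ℝ (fun y : E3 => 2 * y.1 2 / y.1 0) x := by
      simp only [div_eq_mul_inv]
      exact (hq2.const_mul (2:ℝ)).mul (hq0.inv hr)
    have hb : DifferentiableAt ℝ (fun y : E3 => (y.2 1) ^ 2 / (y.1 2) ^ 2) x := by
      simp only [div_eq_mul_inv]
      exact (hp1.pow 2).mul ((hq2.pow 2).inv (pow_ne_zero 2 hρ))
    exact (((hp2.pow 2).add (hp0.pow 2)).add ((ha.mul hp2).mul hp0)).add hb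
  exact (hmid.const_mul (1/(2*m))).add (hVx.comp x hq0)


/-- (Particular integrals of the central-force Hamiltonian in `(r,φ,ρ)`
coordinates.) On the region `r > 0`, `ρ > 0`: (i) `{p_φ, K} = 0`, (ii)
`{p_ρ, K} = −p_r p_ρ/(m r) + p_φ²/(m ρ³)`; in particular `{p_ρ, K} = −(p_r/(m r))·p_ρ`
wherever `p_φ = 0`. -/
theorem central_force_particular_integrals
    (m : ℝ) (hm : 0 < m) (V : ℝ → ℝ) (hV : ∀ s > (0 : ℝ), DifferentiableAt ℝ V s) :
    ∀ x : (Fin 3 → ℝ) × (Fin 3 → ℝ), 0 < x.1 0 → 0 < x.1 2 →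
      poissonBracket (fun y => y.2 1) (Kcf m V) x = 0 ∧
      poissonBracket (fun y => y.2 2) (Kcf m V) x
        = -(x.2 0 * x.2 2) / (m * x.1 0) + (x.2 1) ^ 2 / (m * (x.1 2) ^ 3) ∧
      (x.2 1 = 0 →
        poissonBracket (fun y => y.2 2) (Kcf m V) x = -(x.2 0 / (m * x.1 0)) * x.2 2) := by
  intro x hr hρ
  have hm' : m ≠ 0 := ne_of_gt hm
  have hr' : x.1 0 ≠ 0 := ne_of_gt hr
  have hρ' : x.1 2 ≠ 0 := ne_of_gt hρ
  have hK : DifferentiableAt ℝ (Kcf m V) x := diffKcf m hm' V x hr' hρ' (hV _ hr)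
  set L := fderiv ℝ (Kcf m V) x with hL
  -- directional derivatives along lines
  have line : ∀ v : E3, HasDerivAt (fun t : ℝ => x + t • v) v 0 := by
    intro v
    simpa using ((hasDerivAt_id (0:ℝ)).smul_const v).const_add x
  have dir : ∀ v : E3, HasDerivAt (fun t : ℝ => Kcf m V (x + t • v)) (L v) 0 := by
    intro v
    have hx : HasFDerivAt (Kcf m V) L (x + (0:ℝ) • v) := by simpa using hK.hasFDerivAt
    exact hx.comp_hasDerivAt 0 (line v)
  -- direction eQ 1 : constant
  have h1 : L (eQ 3 1) = 0 := by
    have hconst : (fun t : ℝ => Kcf m V (x + t • eQ 3 1)) = fun _ => Kcf m V x := by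
      funext t
      simp [Kcf, eQ, Pi.single_apply]
    have := dir (eQ 3 1)
    rw [hconst] at this
    exact this.unique (hasDerivAt_const 0 _)
  -- direction eQ 2
  have h2 : L (eQ 3 2) = (1/(2*m)) * ((2 / x.1 0) * x.2 2 * x.2 0
      + (-(x.2 1 ^ 2 * (2 * x.1 2))) / ((x.1 2) ^ 2) ^ 2) := by
    have hfun : (fun t : ℝ => Kcf m V (x + t • eQ 3 2)) = fun t =>
        (1 / (2 * m)) * ((x.2 2) ^ 2 + (x.2 0) ^ 2
          + (2 * (x.1 2 + t) / x.1 0) * (x.2 2) * (x.2 0)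
          + (x.2 1) ^ 2 / (x.1 2 + t) ^ 2) + V (x.1 0) := by
      funext t
      simp [Kcf, eQ, Pi.single_apply]
    have hd : HasDerivAt (fun t : ℝ =>
        (1 / (2 * m)) * ((x.2 2) ^ 2 + (x.2 0) ^ 2
          + (2 * (x.1 2 + t) / x.1 0) * (x.2 2) * (x.2 0)
          + (x.2 1) ^ 2 / (x.1 2 + t) ^ 2) + V (x.1 0))
        ((1/(2*m)) * ((2 / x.1 0) * x.2 2 * x.2 0
          + (-(x.2 1 ^ 2 * (2 * x.1 2))) / ((x.1 2) ^ 2) ^ 2)) 0 := by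
      have ht : HasDerivAt (fun t : ℝ => x.1 2 + t) 1 0 := (hasDerivAt_id 0).const_add _
      have h3 : HasDerivAt (fun t : ℝ => (2 * (x.1 2 + t) / x.1 0) * x.2 2 * x.2 0)
          ((2 / x.1 0) * x.2 2 * x.2 0) 0 := by
        have := (((ht.const_mul 2).div_const (x.1 0)).mul_const (x.2 2)).mul_const (x.2 0)
        simpa [mul_comm, mul_assoc, mul_left_comm] using this
      have h4 : HasDerivAt (fun t : ℝ => (x.2 1) ^ 2 / (x.1 2 + t) ^ 2)
          ((-(x.2 1 ^ 2 * (2 * x.1 2))) / ((x.1 2) ^ 2) ^ 2) 0 := by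
        have hpow : HasDerivAt (fun t : ℝ => (x.1 2 + t) ^ 2) (2 * x.1 2) 0 := by
          have := ht.fun_pow 2
          simpa using this
        have := (hasDerivAt_const (0:ℝ) ((x.2 1)^2)).fun_div hpow (by simpa using pow_ne_zero 2 hρ')
        simpa using this
      have := ((((hasDerivAt_const (0:ℝ) ((x.2 2)^2 + (x.2 0)^2)).fun_add h3).fun_add h4).const_mul
        (1/(2*m))).add_const (V (x.1 0))
      exact this.congr_deriv (by ring)
    have := dir (eQ 3 2)
    rw [hfun] at this
    exact this.unique hd
  -- fderiv of momentum coordinates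
  have hf : ∀ i : Fin 3, fderiv ℝ (fun y : E3 => y.2 i) x = Pc3 i := fun i => (Pc3 i).fderiv
  have hPQ : ∀ i j : Fin 3, (Pc3 i) (eQ 3 j) = 0 := by intro i j; simp [Pc3, eQ]
  have hPP : ∀ i j : Fin 3, (Pc3 i) (eP 3 j) = if i = j then 1 else 0 := by
    intro i j; simp [Pc3, eP, Pi.single_apply]
  have hbr : ∀ i : Fin 3, poissonBracket (fun y => y.2 i) (Kcf m V) x = - L (eQ 3 i) := by
    intro i
    simp only [poissonBracket, hf, hPQ, hPP, ← hL]
    rw [Fin.sum_univ_three]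
    fin_cases i <;> simp
  refine ⟨by rw [hbr 1, h1]; ring, ?_, ?_⟩
  · rw [hbr 2, h2]; field_simp; ring
  · intro hpφ; rw [hbr 2, h2, hpφ]; field_simp; ring
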